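/- Let V be a finite-dimensional real inner product space and Q a finite-dimensional real vector space, b : V × Q → ℝ bilinear, c_h with c_h(v;v,v) ≥ 0, d_h positive semi-definite bilinear. If (u(t), P(t)) ∈ V × Q satisfy (u'(t), v) + c_h(u(t); u(t), v) − b(v, P(t)) + d_h(u(t), v) = 0 for all v ∈ V and b(u(t), q) = 0 for all q ∈ Q, then t ↦ ‖u(t)‖ is nonincreasing. -/

import Mathlib

open scoped RealInnerProductSpace

/-- Mixed-form semi-discrete stability (Theorem 1): with a bilinear constraint
form `b`, positivity of `c` and `d`, and the mixed scheme
`(u'(t),v) + c(u(t);u(t),v) − b(v,P(t)) + d(u(t),v) = 0`, `b(u(t),q) = 0`,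
the map `t ↦ ‖u(t)‖` is nonincreasing. -/
theorem mixed_semi_discrete_stability
    {V : Type*} [NormedAddCommGroup V] [InnerProductSpace ℝ V]
    [FiniteDimensional ℝ V]
    {Q : Type*} [AddCommGroup Q] [Module ℝ Q] [FiniteDimensional ℝ Q]
    (b : V →ₗ[ℝ] Q →ₗ[ℝ] ℝ)
    (c : V → V →ₗ[ℝ] V →ₗ[ℝ] ℝ) (d : V →ₗ[ℝ] V →ₗ[ℝ] ℝ)
    (hc : ∀ v : V, 0 ≤ c v v v) (hd : ∀ v : V, 0 ≤ d v v)
    (u u' : ℝ → V) (P : ℝ → Q)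
    (hderiv : ∀ t ∈ Set.Ici (0 : ℝ), HasDerivAt u (u' t) t)
    (heq : ∀ t ∈ Set.Ici (0 : ℝ), ∀ v : V,
      ⟪u' t, v⟫ + c (u t) (u t) v - b v (P t) + d (u t) v = 0)
    (hconstraint : ∀ t ∈ Set.Ici (0 : ℝ), ∀ q : Q, b (u t) q = 0) :
    AntitoneOn (fun t => ‖u t‖) (Set.Ici (0 : ℝ)) := by
  have key : ∀ t ∈ Set.Ici (0 : ℝ), ⟪u' t, u t⟫ ≤ 0 := by
    intro t ht
    have h1 := heq t ht (u t)
    have h2 := hconstraint t ht (P t)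
    have h3 := hc (u t)
    have h4 := hd (u t)
    linarith
  have hg : AntitoneOn (fun t => ‖u t‖ ^ 2) (Set.Ici (0 : ℝ)) := by
    have hgd : ∀ t ∈ Set.Ici (0 : ℝ),
        HasDerivAt (fun t => ‖u t‖ ^ 2) (⟪u' t, u t⟫ + ⟪u t, u' t⟫) t := by
      intro t ht
      have := (hderiv t ht).inner ℝ (hderiv t ht)
      simpa [real_inner_self_eq_norm_sq, add_comm] using this
    apply antitoneOn_of_deriv_nonpos (convex_Ici 0)
    · exact fun t ht => ((hgd t ht).continuousAt).continuousWithinAt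
    · intro t ht
      rw [interior_Ici] at ht
      exact ((hgd t (Set.mem_Ici.mpr (le_of_lt (Set.mem_Ioi.mp ht)))).differentiableAt).differentiableWithinAt
    · intro t ht
      rw [interior_Ici] at ht
      have ht' : t ∈ Set.Ici (0 : ℝ) := Set.mem_Ici.mpr (le_of_lt (Set.mem_Ioi.mp ht))
      rw [(hgd t ht').deriv]
      have h1 := key t ht'
      have h2 : ⟪u t, u' t⟫ ≤ 0 := by rw [real_inner_comm]; exact h1
      linarith
  intro s hs t ht hst
  have h := hg hs ht hst
  exact (pow_le_pow_iff_left₀ (norm_nonneg _) (norm_nonneg _) two_ne_zero).mp h
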